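/- Let X and Y be uniformly discrete metric spaces of bounded geometry and f : X → Y a quasi-isometry. Then f is at bounded distance from a bijection X → Y if and only if there exist constants C, r such that for every finite subset S ⊆ Y, | |f⁻¹(S)| − |S| | ≤ C·|∂_r(S)|. -/

import Mathlib

open scoped ENNReal

/-- The closed `r`-neighborhood of a set `A`. -/
def nbhd {Z : Type*} [MetricSpace Z] (r : ℝ) (A : Set Z) : Set Z :=
  {z | ∃ a ∈ A, dist z a ≤ r}

/-- The `r`-boundary of `A`: points outside `A` within distance `r` of `A`. -/
def bdry {Z : Type*} [MetricSpace Z] (r : ℝ) (A : Set Z) : Set Z :=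
  nbhd r A \ A

/-- Uniformly discrete metric space. -/
def UniformlyDiscrete (Z : Type*) [MetricSpace Z] : Prop :=
  ∃ r > (0 : ℝ), ∀ x y : Z, dist x y < r → x = y

/-- Bounded geometry: balls of radius `r` have at most `N_r` points. -/
def BoundedGeometry (Z : Type*) [MetricSpace Z] : Prop :=
  ∀ r : ℝ, ∃ N : ℕ, ∀ x : Z, {y : Z | dist y x ≤ r}.Finite ∧
    {y : Z | dist y x ≤ r}.ncard ≤ N

/-- Coarse Lipschitz map. -/
def CoarseLipschitz {X Y : Type*} [MetricSpace X] [MetricSpace Y] (f : X → Y) : Prop :=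
  ∃ K L : ℝ, ∀ x₁ x₂ : X, dist (f x₁) (f x₂) ≤ K * dist x₁ x₂ + L

namespace Stmt8Aux

open Set Function

/-- Schröder–Bernstein with control on which injection is used. -/
theorem csb {X Y : Type*} {u : Y → X} {v : X → Y}
    (hu : Function.Injective u) (hv : Function.Injective v) :
    ∃ h : X → Y, Function.Bijective h ∧ ∀ x, h x = v x ∨ u (h x) = x := by
  classical
  cases' isEmpty_or_nonempty Y with hY hY
  · have : IsEmpty X := Function.isEmpty v
    exact ⟨fun x => (this.false x).elim, ⟨fun x => (this.false x).elim,
      fun y => (hY.false y).elim⟩, fun x => (this.false x).elim⟩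
  set F : Set X →o Set X :=
    { toFun := fun s => (u '' (v '' s)ᶜ)ᶜ
      monotone' := fun s t hst =>
        compl_subset_compl.mpr <| image_mono <| compl_subset_compl.mpr <| image_mono hst }
  set s : Set X := F.lfp
  have hs : (u '' (v '' s)ᶜ)ᶜ = s := F.map_lfp
  have hns : u '' (v '' s)ᶜ = sᶜ := compl_injective (by simp [hs])
  set u' := invFun u with hu'
  have u'u : LeftInverse u' u := leftInverse_invFun hu
  have hu'ns : u' '' sᶜ = (v '' s)ᶜ := by rw [← hns, u'u.image_image]
  set h : X → Y := s.piecewise v u' with hh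
  have hsurj : Surjective h := by rw [← range_eq_univ, range_piecewise, hu'ns, union_compl_self]
  have hinj : Injective h := by
    refine (injective_piecewise_iff _).2 ⟨hv.injOn, ?_, ?_⟩
    · intro x hx y hy hxy
      obtain ⟨x', _, rfl⟩ : x ∈ u '' (v '' s)ᶜ := by rwa [hns]
      obtain ⟨y', _, rfl⟩ : y ∈ u '' (v '' s)ᶜ := by rwa [hns]
      rw [u'u _, u'u _] at hxy
      rw [hxy]
    · intro x hx y hy hxy
      obtain ⟨y', hy', rfl⟩ : y ∈ u '' (v '' s)ᶜ := by rwa [hns]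
      rw [u'u _] at hxy
      exact hy' ⟨x, hx, hxy⟩
  refine ⟨h, ⟨hinj, hsurj⟩, fun x => ?_⟩
  by_cases hx : x ∈ s
  · left; simp [hh, Set.piecewise_eq_of_mem _ _ _ hx]
  · right
    obtain ⟨y', _, rfl⟩ : x ∈ u '' (v '' s)ᶜ := by rwa [hns]
    simp [hh, Set.piecewise_eq_of_notMem _ _ _ hx, u'u _]

section Basic

variable {Z : Type*} [MetricSpace Z]

lemma subset_nbhd {r : ℝ} (hr : 0 ≤ r) {A : Set Z} : A ⊆ nbhd r A :=
  fun z hz => ⟨z, hz, by simpa using hr⟩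

lemma nbhd_mono_set {r : ℝ} {A B : Set Z} (h : A ⊆ B) : nbhd r A ⊆ nbhd r B :=
  fun z ⟨a, ha, hd⟩ => ⟨a, h ha, hd⟩

lemma nbhd_mono_radius {r s : ℝ} (h : r ≤ s) {A : Set Z} : nbhd r A ⊆ nbhd s A :=
  fun z ⟨a, ha, hd⟩ => ⟨a, ha, hd.trans h⟩

lemma nbhd_nbhd {r s : ℝ} {A : Set Z} : nbhd r (nbhd s A) ⊆ nbhd (r + s) A := by
  rintro z ⟨b, ⟨a, ha, hba⟩, hzb⟩
  exact ⟨a, ha, (dist_triangle z b a).trans (add_le_add hzb hba)⟩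

lemma ball_finite (hbg : BoundedGeometry Z) (r : ℝ) (x : Z) : {y : Z | dist y x ≤ r}.Finite :=
  ((hbg r).choose_spec x).1

lemma nbhd_finite (hbg : BoundedGeometry Z) {A : Set Z} (hA : A.Finite) (r : ℝ) :
    (nbhd r A).Finite := by
  have : nbhd r A ⊆ ⋃ a ∈ A, {z : Z | dist z a ≤ r} := by
    rintro z ⟨a, ha, hd⟩
    exact Set.mem_biUnion ha hd
  exact (hA.biUnion (fun a _ => ball_finite hbg r a)).subset this

lemma bdry_subset_nbhd {r : ℝ} {A : Set Z} : bdry r A ⊆ nbhd r A := Set.diff_subset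

/-- fiber-counting: if all fibers of `φ` over `A` have at most `P` points then
`|A| ≤ P * |φ '' A|`. -/
lemma ncard_le_mul_ncard_image {α β : Type*} (φ : α → β) {A : Set α} (hA : A.Finite) (P : ℕ)
    (h : ∀ b : β, ({a ∈ A | φ a = b}).ncard ≤ P) : A.ncard ≤ P * (φ '' A).ncard := by
  classical
  have := Finset.card_le_mul_card_image (f := φ) hA.toFinset P ?cond
  · have h1 : A.ncard = hA.toFinset.card := by
      exact Set.ncard_eq_toFinset_card A hA
    have h2 : (φ '' A).ncard = (hA.toFinset.image φ).card := by
      rw [← Set.ncard_coe_finset]; congr 1; simp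
    rw [h1, h2]; exact this
  case cond =>
    intro b _
    have : (({a ∈ hA.toFinset | φ a = b} : Finset α) : Set α) = {a ∈ A | φ a = b} := by
      ext a; simp
    calc ({a ∈ hA.toFinset | φ a = b} : Finset α).card
        = ({a ∈ A | φ a = b}).ncard := by rw [← this, Set.ncard_coe_finset]
      _ ≤ P := h b

end Basic

end Stmt8Aux

namespace Stmt8Aux

section Core

open Set Function

variable {X Y : Type*} [MetricSpace X] [MetricSpace Y]

lemma shells (w : ℝ) (hw : 0 < w)
    (hfinN : ∀ A : Set Y, A.Finite → (nbhd w A).Finite)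
    {S : Set Y} (hS : S.Finite) :
    (∀ j, ((nbhd w)^[j] S).Finite) ∧ (∀ j, (nbhd w)^[j] S ⊆ (nbhd w)^[j+1] S) := by
  constructor
  · intro j; induction j with
    | zero => exact hS
    | succ j ih => rw [Function.iterate_succ_apply']; exact hfinN _ ih
  · intro j; rw [Function.iterate_succ_apply']
    exact Stmt8Aux.subset_nbhd hw.le

/-- Primal Hall condition : mass of an iterated neighborhood dominates cardinality. -/
lemma primal_hall (f : X → Y) (g : Y → X) (w : ℝ) (hw : 0 < w)
    (Cn P : ℕ) (hCn : 1 ≤ Cn) (hP : 1 ≤ P)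
    (hfinN : ∀ A : Set Y, A.Finite → (nbhd w A).Finite)
    (hfinpre : ∀ A : Set Y, A.Finite → (f ⁻¹' A).Finite)
    (hest : ∀ T : Set Y, T.Finite →
      T.ncard ≤ (f ⁻¹' T).ncard + Cn * (bdry w T).ncard ∧
      (f ⁻¹' T).ncard ≤ T.ncard + Cn * (bdry w T).ncard)
    (hsur : ∀ y : Y, dist (f (g y)) y ≤ w)
    (hball : ∀ b : Y, ({y : Y | dist y b ≤ w}).ncard ≤ P)
    (hballfin : ∀ b : Y, ({y : Y | dist y b ≤ w}).Finite)
    {S : Set Y} (hS : S.Finite) :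
    S.ncard ≤ (f ⁻¹' ((nbhd w)^[Cn^3 * P + 3] S)).ncard := by
  classical
  by_contra hK
  push_neg at hK
  set k0 : ℕ := Cn^3 * P with hk0
  set K : ℕ := k0 + 3 with hKdef
  set T : ℕ → Set Y := fun j => (nbhd w)^[j] S with hT
  obtain ⟨hTfin, hTsub⟩ := shells w hw hfinN hS
  have hTsucc : ∀ j, T (j+1) = nbhd w (T j) := fun j => Function.iterate_succ_apply' _ _ _
  have hTmono : ∀ {i j : ℕ}, i ≤ j → T i ⊆ T j := by
    intro i j hij
    exact monotone_nat_of_le_succ hTsub hij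
  set t : ℕ → ℕ := fun j => (T j).ncard with ht
  set m : ℕ → ℕ := fun j => (f ⁻¹' T j).ncard with hm
  set A : ℕ → ℕ := fun j => (bdry w (T j)).ncard with hA
  have hbdryT : ∀ j, bdry w (T j) = T (j+1) \ T j := by
    intro j; rw [hTsucc]; rfl
  have htA : ∀ j, t (j+1) = t j + A j := by
    intro j
    have h1 : (T (j+1) \ T j).ncard + (T j).ncard = (T (j+1)).ncard :=
      Set.ncard_diff_add_ncard_of_subset (hTsub j) (hTfin (j+1))
    have h2 : A j = (T (j+1) \ T j).ncard := by rw [hA]; simp only []; rw [hbdryT]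
    have h3 : t (j+1) = (T (j+1)).ncard := rfl
    have h4 : t j = (T j).ncard := rfl
    omega
  have htmono : ∀ {i j : ℕ}, i ≤ j → t i ≤ t j := by
    intro i j hij; exact Set.ncard_le_ncard (hTmono hij) (hTfin j)
  have hmmono : ∀ {i j : ℕ}, i ≤ j → m i ≤ m j := by
    intro i j hij
    exact Set.ncard_le_ncard (Set.preimage_mono (hTmono hij)) (hfinpre _ (hTfin j))
  set n : ℕ := S.ncard with hn
  have ht0 : t 0 = n := rfl
  have hmlt : ∀ j, j ≤ K → m j < n := fun j hj => lt_of_le_of_lt (hmmono hj) hK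
  have hCnpos : (0:ℝ) < Cn := by exact_mod_cast hCn
  set δ : ℝ := (n : ℝ) - (m 0 : ℝ) with hδ
  have hδ1 : (1:ℝ) ≤ δ := by
    have h := hmlt 0 (by omega)
    have : (m 0 : ℝ) + 1 ≤ n := by exact_mod_cast h
    rw [hδ]; linarith
  have hδpos : (0:ℝ) < δ := by linarith
  set σ : ℕ → ℝ := fun j => (t j : ℝ) - n with hσ
  have hσ0 : ∀ j, 0 ≤ σ j := by
    intro j
    have h : n ≤ t j := by rw [← ht0]; exact htmono (Nat.zero_le j)
    have : (n:ℝ) ≤ t j := by exact_mod_cast h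
    simp only [hσ]; linarith
  have hAσ : ∀ j, j ≤ K → σ j + ((n:ℝ) - m j) ≤ Cn * A j := by
    intro j hj
    have h1 := (hest _ (hTfin j)).1
    have : (t j : ℝ) ≤ (m j : ℝ) + (Cn : ℝ) * (A j : ℝ) := by exact_mod_cast h1
    simp only [hσ]; linarith
  have hmnonneg : ∀ j, j ≤ K → (0:ℝ) ≤ (n:ℝ) - m j := by
    intro j hj
    have h := hmlt j hj
    have : (m j : ℝ) < n := by exact_mod_cast h
    linarith
  have hσA : ∀ j, j ≤ K → σ j ≤ Cn * A j := by
    intro j hj; have h1 := hAσ j hj; have h2 := hmnonneg j hj; linarith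
  -- growth
  have hσ1 : δ / Cn ≤ σ 1 := by
    have h0 := hAσ 0 (by omega)
    have hσz : σ 0 = 0 := by simp only [hσ, ht0]; ring
    have hA0 : δ ≤ Cn * A 0 := by rw [hσz] at h0; rw [hδ]; linarith
    have hσ1A : σ 1 = A 0 := by
      simp only [hσ]; rw [htA 0, ht0]; push_cast; ring
    rw [hσ1A, div_le_iff₀ hCnpos]
    linarith
  have hgrow : ∀ i, i ≤ k0 → (1 + 1/(Cn:ℝ))^i * (δ / Cn) ≤ σ (i+1) := by
    intro i
    induction i with
    | zero => intro _; simpa using hσ1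
    | succ i ih =>
      intro hik
      have hi := ih (by omega)
      have hstep : σ (i+1+1) = σ (i+1) + A (i+1) := by
        simp only [hσ]; rw [htA (i+1)]; push_cast; ring
      have hAub : σ (i+1) ≤ Cn * A (i+1) := hσA (i+1) (by omega)
      have hb : (0:ℝ) ≤ 1 + 1/(Cn:ℝ) := by positivity
      calc (1 + 1/(Cn:ℝ))^(i+1) * (δ / Cn)
          = ((1 + 1/(Cn:ℝ))^i * (δ / Cn)) * (1 + 1/(Cn:ℝ)) := by ring
        _ ≤ σ (i+1) * (1 + 1/(Cn:ℝ)) := mul_le_mul_of_nonneg_right hi hb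
        _ = σ (i+1) + σ (i+1) * (1/(Cn:ℝ)) := by ring
        _ ≤ σ (i+1) + A (i+1) := by
            have h3 : σ (i+1) * (1/(Cn:ℝ)) ≤ A (i+1) := by
              rw [mul_one_div, div_le_iff₀ hCnpos]
              linarith
            linarith
        _ = σ (i+1+1) := hstep.symm
  -- accretion cap
  set D : Set Y := T (k0+2) \ T (k0+1) with hD
  set W : Set Y := (fun y => f (g y)) '' D with hW
  have hDfin : D.Finite := (hTfin (k0+2)).subset Set.diff_subset
  have hWfin : W.Finite := hDfin.image _
  have hDcap : D.ncard ≤ P * W.ncard := by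
    apply Stmt8Aux.ncard_le_mul_ncard_image _ hDfin
    intro b
    apply le_trans (Set.ncard_le_ncard _ (hballfin b)) (hball b)
    rintro y ⟨_, hyb⟩
    rw [Set.mem_setOf_eq]
    calc dist y b = dist (f (g y)) y := by rw [hyb]; exact dist_comm _ _
      _ ≤ w := hsur y
  have hWsub : W ⊆ T K \ T 0 := by
    rintro p ⟨y, ⟨hy1, hy2⟩, rfl⟩
    refine ⟨?_, ?_⟩
    · have hmem : f (g y) ∈ nbhd w (T (k0+2)) := ⟨y, hy1, hsur y⟩
      rw [← hTsucc] at hmem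
      exact hmem
    · intro hp0
      apply hy2
      have hpk : f (g y) ∈ T k0 := hTmono (Nat.zero_le k0) hp0
      have hmem : y ∈ nbhd w (T k0) := ⟨f (g y), hpk, by rw [dist_comm]; exact hsur y⟩
      rw [← hTsucc] at hmem
      exact hmem
  have hWT : W ⊆ T K := fun p hp => (hWsub hp).1
  have hWT0 : Disjoint W (T 0) := by
    rw [Set.disjoint_left]; intro p hp; exact (hWsub hp).2
  have hpreWfin : (f ⁻¹' W).Finite := hfinpre _ hWfin
  have haccr : m 0 + W.ncard ≤ m K := by
    have hdisj : Disjoint (f ⁻¹' W) (f ⁻¹' T 0) := Disjoint.preimage f hWT0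
    have hub : (f ⁻¹' W) ∪ (f ⁻¹' T 0) ⊆ f ⁻¹' T K := by
      apply Set.union_subset
      · exact Set.preimage_mono hWT
      · exact Set.preimage_mono (hTmono (Nat.zero_le K))
    have hcard : ((f ⁻¹' W) ∪ (f ⁻¹' T 0)).ncard = (f ⁻¹' W).ncard + m 0 :=
      Set.ncard_union_eq hdisj hpreWfin (hfinpre _ (hTfin 0))
    have hle : ((f ⁻¹' W) ∪ (f ⁻¹' T 0)).ncard ≤ m K :=
      Set.ncard_le_ncard hub (hfinpre _ (hTfin K))
    have hWle : W.ncard ≤ (f ⁻¹' W).ncard := by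
      have himg : W ⊆ f '' (f ⁻¹' W) := by
        rintro p ⟨y, hy, rfl⟩
        exact ⟨g y, show f (g y) ∈ W from ⟨y, hy, rfl⟩, rfl⟩
      calc W.ncard ≤ (f '' (f ⁻¹' W)).ncard :=
            Set.ncard_le_ncard himg (hpreWfin.image f)
        _ ≤ (f ⁻¹' W).ncard := Set.ncard_image_le hpreWfin
    omega
  -- final contradiction
  have hWδ : (W.ncard : ℝ) ≤ δ - 1 := by
    have h1 : m 0 + W.ncard ≤ m K := haccr
    have h2 : m K + 1 ≤ n := hmlt K (le_refl K)
    have h3 : m 0 + W.ncard + 1 ≤ n := by omega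
    have h4 : ((m 0 + W.ncard + 1 : ℕ) : ℝ) ≤ (n:ℝ) := by exact_mod_cast h3
    push_cast at h4
    rw [hδ]; linarith
  have hAD : (A (k0+1) : ℝ) ≤ (P:ℝ) * W.ncard := by
    have : A (k0+1) = D.ncard := by
      simp only [hA, hD]; rw [hbdryT]
    rw [this]; exact_mod_cast hDcap
  have hPpos : (0:ℝ) < P := by exact_mod_cast hP
  have hchain : (1 + 1/(Cn:ℝ))^k0 * (δ / Cn) ≤ (Cn:ℝ) * P * δ := by
    calc (1 + 1/(Cn:ℝ))^k0 * (δ / Cn) ≤ σ (k0+1) := hgrow k0 (le_refl k0)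
      _ ≤ Cn * A (k0+1) := hσA (k0+1) (by omega)
      _ ≤ Cn * (P * W.ncard) := by
          apply mul_le_mul_of_nonneg_left hAD (le_of_lt hCnpos)
      _ ≤ Cn * (P * (δ - 1)) := by
          apply mul_le_mul_of_nonneg_left _ (le_of_lt hCnpos)
          exact mul_le_mul_of_nonneg_left hWδ (le_of_lt hPpos)
      _ ≤ (Cn:ℝ) * P * δ := by nlinarith
  have hcancel : (1 + 1/(Cn:ℝ))^k0 ≤ (Cn:ℝ)^2 * P := by
    have h1 : (1 + 1/(Cn:ℝ))^k0 * δ ≤ (Cn:ℝ)^2 * P * δ := by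
      have := mul_le_mul_of_nonneg_right hchain (le_of_lt hCnpos)
      have heq : (1 + 1/(Cn:ℝ))^k0 * (δ / Cn) * Cn = (1 + 1/(Cn:ℝ))^k0 * δ := by
        field_simp
      rw [heq] at this
      nlinarith
    exact le_of_mul_le_mul_right h1 hδpos
  have hpow : ((Cn:ℝ)^2 * P) < (1 + 1/(Cn:ℝ))^k0 := by
    have h2 : (2:ℝ) ≤ (1 + 1/(Cn:ℝ))^Cn := by
      have hb := one_add_mul_le_pow (a := 1/(Cn:ℝ)) (le_trans (by norm_num : (-2:ℝ) ≤ 0) (by positivity)) Cn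
      have hc : (Cn:ℝ) * (1/(Cn:ℝ)) = 1 := by field_simp
      rw [hc] at hb; linarith
    have hnat : (Cn^2 * P : ℕ) < 2 ^ (Cn^2 * P) := Nat.lt_two_pow_self
    calc ((Cn:ℝ)^2 * P) = ((Cn^2 * P : ℕ) : ℝ) := by push_cast; ring
      _ < (2:ℝ) ^ (Cn^2 * P : ℕ) := by exact_mod_cast hnat
      _ ≤ ((1 + 1/(Cn:ℝ))^Cn) ^ (Cn^2 * P : ℕ) := by
          apply pow_le_pow_left₀ (by norm_num) h2
      _ = (1 + 1/(Cn:ℝ))^(Cn * (Cn^2 * P)) := by rw [← pow_mul]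
      _ = (1 + 1/(Cn:ℝ))^k0 := by rw [hk0]; ring_nf
  linarith

end Core

end Stmt8Aux

namespace Stmt8Aux

section Mirror

open Set Function

variable {X Y : Type*} [MetricSpace X] [MetricSpace Y]

/-- Mirror Hall condition : cardinality of an iterated neighborhood dominates mass. -/
lemma mirror_hall (f : X → Y) (g : Y → X) (w : ℝ) (hw : 0 < w)
    (Cn P : ℕ) (hCn : 1 ≤ Cn) (hP : 1 ≤ P)
    (hfinN : ∀ A : Set Y, A.Finite → (nbhd w A).Finite)
    (hfinpre : ∀ A : Set Y, A.Finite → (f ⁻¹' A).Finite)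
    (hest : ∀ T : Set Y, T.Finite →
      T.ncard ≤ (f ⁻¹' T).ncard + Cn * (bdry w T).ncard ∧
      (f ⁻¹' T).ncard ≤ T.ncard + Cn * (bdry w T).ncard)
    (hsur : ∀ y : Y, dist (f (g y)) y ≤ w)
    (hball : ∀ b : Y, ({y : Y | dist y b ≤ w}).ncard ≤ P)
    (hballfin : ∀ b : Y, ({y : Y | dist y b ≤ w}).Finite)
    {S : Set Y} (hS : S.Finite) :
    (f ⁻¹' S).ncard ≤ ((nbhd w)^[3 * P * Cn^2 + 3] S).ncard := by
  classical
  by_contra hfail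
  push_neg at hfail
  set a0 : ℕ := P * Cn^2 with ha0
  set J : ℕ := 3 * a0 + 2 with hJ
  have hK2 : 3 * P * Cn^2 + 3 = J + 1 := by rw [hJ, ha0]; ring
  rw [hK2] at hfail
  set T : ℕ → Set Y := fun j => (nbhd w)^[j] S with hT
  obtain ⟨hTfin, hTsub⟩ := shells w hw hfinN hS
  have hTsucc : ∀ j, T (j+1) = nbhd w (T j) := fun j => Function.iterate_succ_apply' _ _ _
  have hTmono : ∀ {i j : ℕ}, i ≤ j → T i ⊆ T j := by
    intro i j hij; exact monotone_nat_of_le_succ hTsub hij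
  set t : ℕ → ℕ := fun j => (T j).ncard with ht
  set m : ℕ → ℕ := fun j => (f ⁻¹' T j).ncard with hm
  set A : ℕ → ℕ := fun j => (bdry w (T j)).ncard with hA
  have hbdryT : ∀ j, bdry w (T j) = T (j+1) \ T j := by
    intro j; rw [hTsucc]; rfl
  have htA : ∀ j, t (j+1) = t j + A j := by
    intro j
    have h1 : (T (j+1) \ T j).ncard + (T j).ncard = (T (j+1)).ncard :=
      Set.ncard_diff_add_ncard_of_subset (hTsub j) (hTfin (j+1))
    have h2 : A j = (T (j+1) \ T j).ncard := by rw [hA]; simp only []; rw [hbdryT]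
    have h3 : t (j+1) = (T (j+1)).ncard := rfl
    have h4 : t j = (T j).ncard := rfl
    omega
  have htmono : ∀ {i j : ℕ}, i ≤ j → t i ≤ t j := by
    intro i j hij; exact Set.ncard_le_ncard (hTmono hij) (hTfin j)
  have hmmono : ∀ {i j : ℕ}, i ≤ j → m i ≤ m j := by
    intro i j hij
    exact Set.ncard_le_ncard (Set.preimage_mono (hTmono hij)) (hfinpre _ (hTfin j))
  set μ : ℕ := (f ⁻¹' S).ncard with hμ
  have hμ0 : m 0 = μ := rfl
  have htlt : ∀ j, j ≤ J + 1 → t j < μ := fun j hj => lt_of_le_of_lt (htmono hj) hfail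
  -- deficiency at J
  set eJ : ℕ := μ - t J with heJ
  have heJ1 : 1 ≤ eJ ∧ t J + eJ = μ := by
    have := htlt J (by omega); omega
  -- basic estimate consequence : μ ≤ t j + Cn * A j for all j ≤ J+1
  have hbase : ∀ j, μ ≤ t j + Cn * A j := by
    intro j
    have h1 : m j ≤ t j + Cn * A j := (hest _ (hTfin j)).2
    have h2 : μ ≤ m j := by rw [← hμ0]; exact hmmono (Nat.zero_le j)
    omega
  -- bands
  set D : ℕ → Set Y := fun i => T (i+1) \ T i with hD
  set Wf : ℕ → Set Y := fun i => (fun y => f (g y)) '' D i with hWf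
  have hDfin : ∀ i, (D i).Finite := fun i => (hTfin (i+1)).subset Set.diff_subset
  have hWffin : ∀ i, (Wf i).Finite := fun i => (hDfin i).image _
  have hDA : ∀ i, A i = (D i).ncard := by
    intro i; rw [hA]; simp only []; rw [hbdryT]
  have hDcap : ∀ i, (D i).ncard ≤ P * (Wf i).ncard := by
    intro i
    apply Stmt8Aux.ncard_le_mul_ncard_image _ (hDfin i)
    intro b
    apply le_trans (Set.ncard_le_ncard _ (hballfin b)) (hball b)
    rintro y ⟨_, hyb⟩
    rw [Set.mem_setOf_eq]
    calc dist y b = dist (f (g y)) y := by rw [hyb]; exact dist_comm _ _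
      _ ≤ w := hsur y
  have hband : ∀ a : ℕ, Wf (3*a+1) ⊆ T (3*a+3) \ T (3*a) := by
    rintro a p ⟨y, ⟨hy1, hy2⟩, rfl⟩
    constructor
    · have hmem : f (g y) ∈ nbhd w (T (3*a+1+1)) := ⟨y, hy1, hsur y⟩
      rw [← hTsucc] at hmem
      exact hmem
    · intro hp0
      apply hy2
      have hmem : y ∈ nbhd w (T (3*a)) := ⟨f (g y), hp0, by rw [dist_comm]; exact hsur y⟩
      rw [← hTsucc] at hmem
      exact hmem
  have hbandJ : ∀ a : ℕ, a < a0 → Wf (3*a+1) ⊆ T J := by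
    intro a ha p hp
    exact hTmono (by omega) ((hband a hp).1)
  have hbanddisj : ∀ a a' : ℕ, a < a' → Disjoint (Wf (3*a+1)) (Wf (3*a'+1)) := by
    intro a a' haa
    rw [Set.disjoint_left]
    intro p hp hp'
    have h1 : p ∈ T (3*a+3) := (hband a hp).1
    have h2 : p ∉ T (3*a') := (hband a' hp').2
    exact h2 (hTmono (by omega) h1)
  have hband0 : ∀ a : ℕ, Disjoint (Wf (3*a+1)) (T 0) := by
    intro a
    rw [Set.disjoint_left]
    intro p hp hp0
    exact (hband a hp).2 (hTmono (Nat.zero_le _) hp0)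
  -- counting the accreted mass
  set q : ℕ → ℕ := fun a => (f ⁻¹' Wf (3*a+1)).ncard with hq
  have haccr : μ + ∑ a ∈ Finset.range a0, q a ≤ m J := by
    set PJ := (hfinpre _ (hTfin J)).toFinset with hPJ
    set P0 := (hfinpre _ (hTfin 0)).toFinset with hP0
    set Q : ℕ → Finset X := fun a => (hfinpre _ (hWffin (3*a+1))).toFinset with hQ
    have hQdisj : ∀ a ∈ Finset.range a0, ∀ a' ∈ Finset.range a0, a ≠ a' →
        Disjoint (Q a) (Q a') := by
      intro a _ a' _ haa
      rcases Nat.lt_or_ge a a' with h | h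
      · rw [Finset.disjoint_left]
        intro x hx hx'
        rw [hQ] at hx hx'
        simp only [Set.Finite.mem_toFinset] at hx hx'
        exact Set.disjoint_left.mp (Disjoint.preimage f (hbanddisj a a' h)) hx hx'
      · have h' : a' < a := by omega
        rw [Finset.disjoint_right]
        intro x hx hx'
        rw [hQ] at hx hx'
        simp only [Set.Finite.mem_toFinset] at hx hx'
        exact Set.disjoint_left.mp (Disjoint.preimage f (hbanddisj a' a h')) hx hx'
    have hP0Q : Disjoint P0 ((Finset.range a0).biUnion Q) := by
      rw [Finset.disjoint_right]
      intro x hx hx0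
      rw [Finset.mem_biUnion] at hx
      obtain ⟨a, _, hxa⟩ := hx
      rw [hQ] at hxa
      simp only [Set.Finite.mem_toFinset] at hxa
      rw [hP0] at hx0
      simp only [Set.Finite.mem_toFinset] at hx0
      exact Set.disjoint_left.mp (Disjoint.preimage f (hband0 a)) hxa hx0
    have hsub : P0 ∪ (Finset.range a0).biUnion Q ⊆ PJ := by
      intro x hx
      rw [Finset.mem_union] at hx
      rw [hPJ]; simp only [Set.Finite.mem_toFinset]
      rcases hx with hx | hx
      · rw [hP0] at hx; simp only [Set.Finite.mem_toFinset] at hx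
        exact Set.preimage_mono (hTmono (Nat.zero_le J)) hx
      · rw [Finset.mem_biUnion] at hx
        obtain ⟨a, ha, hxa⟩ := hx
        rw [hQ] at hxa; simp only [Set.Finite.mem_toFinset] at hxa
        rw [Finset.mem_range] at ha
        exact Set.preimage_mono (hbandJ a ha) hxa
    have hcard1 : (P0 ∪ (Finset.range a0).biUnion Q).card
        = P0.card + ∑ a ∈ Finset.range a0, (Q a).card := by
      rw [Finset.card_union_of_disjoint hP0Q, Finset.card_biUnion hQdisj]
    have hcard2 : (P0 ∪ (Finset.range a0).biUnion Q).card ≤ PJ.card :=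
      Finset.card_le_card hsub
    have hμP0 : μ = P0.card := by
      rw [hP0, ← Set.ncard_eq_toFinset_card _ (hfinpre _ (hTfin 0))]
      rfl
    have hmJ : m J = PJ.card := by
      rw [hPJ, ← Set.ncard_eq_toFinset_card _ (hfinpre _ (hTfin J))]
    have hqQ : ∀ a, q a = (Q a).card := by
      intro a
      rw [hQ, hq, ← Set.ncard_eq_toFinset_card _ (hfinpre _ (hWffin (3*a+1)))]
    have hsum : ∑ a ∈ Finset.range a0, q a = ∑ a ∈ Finset.range a0, (Q a).card :=
      Finset.sum_congr rfl (fun a _ => hqQ a)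
    rw [hμP0, hmJ, hsum]
    omega
  -- each band carries at least eJ / (P * Cn) mass
  have hbandlow : ∀ a : ℕ, a < a0 → eJ ≤ Cn * P * q a := by
    intro a ha
    have h1 : Cn * A (3*a+1) ≥ eJ := by
      have hb := hbase (3*a+1)
      have ht1 : t (3*a+1) ≤ t J := htmono (by omega)
      omega
    have h2 : A (3*a+1) ≤ P * (Wf (3*a+1)).ncard := by
      rw [hDA]; exact hDcap (3*a+1)
    have h3 : (Wf (3*a+1)).ncard ≤ q a := by
      rw [hq]
      have himg : Wf (3*a+1) ⊆ f '' (f ⁻¹' Wf (3*a+1)) := by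
        rintro p ⟨y, hy, rfl⟩
        exact ⟨g y, show f (g y) ∈ Wf (3*a+1) from ⟨y, hy, rfl⟩, rfl⟩
      calc (Wf (3*a+1)).ncard ≤ (f '' (f ⁻¹' Wf (3*a+1))).ncard :=
            Set.ncard_le_ncard himg ((hfinpre _ (hWffin (3*a+1))).image f)
        _ ≤ (f ⁻¹' Wf (3*a+1)).ncard := Set.ncard_image_le (hfinpre _ (hWffin (3*a+1)))
    calc eJ ≤ Cn * A (3*a+1) := h1
      _ ≤ Cn * (P * (Wf (3*a+1)).ncard) := Nat.mul_le_mul_left _ h2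
      _ ≤ Cn * (P * q a) := Nat.mul_le_mul_left _ (Nat.mul_le_mul_left _ h3)
      _ = Cn * P * q a := by ring
  -- summing
  have hsumlow : Cn * eJ ≤ ∑ a ∈ Finset.range a0, q a := by
    have h1 : a0 * eJ ≤ Cn * P * (∑ a ∈ Finset.range a0, q a) := by
      calc a0 * eJ = ∑ _a ∈ Finset.range a0, eJ := by
            rw [Finset.sum_const, Finset.card_range, smul_eq_mul]
        _ ≤ ∑ a ∈ Finset.range a0, Cn * P * q a := by
            apply Finset.sum_le_sum
            intro a ha
            exact hbandlow a (Finset.mem_range.mp ha)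
        _ = Cn * P * (∑ a ∈ Finset.range a0, q a) := by rw [Finset.mul_sum]
    have h2 : Cn * P * (Cn * eJ) = a0 * eJ * 1 := by rw [ha0]; ring
    have hCP : 0 < Cn * P := by positivity
    apply Nat.le_of_mul_le_mul_left _ hCP
    calc Cn * P * (Cn * eJ) = a0 * eJ := by rw [ha0]; ring
      _ ≤ Cn * P * (∑ a ∈ Finset.range a0, q a) := h1
  -- final contradiction
  have hmJlow : t J + eJ + Cn * eJ ≤ m J := by
    have := heJ1.2
    omega
  have hestJ : m J ≤ t J + Cn * A J := (hest _ (hTfin J)).2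
  have hAJ : eJ + 1 ≤ A J := by
    by_contra hc
    push_neg at hc
    have hc' : A J ≤ eJ := by omega
    have : Cn * A J ≤ Cn * eJ := Nat.mul_le_mul_left _ hc'
    omega
  have hlast : μ + 1 ≤ t (J+1) := by
    have h1 := htA J
    have h2 := heJ1.2
    omega
  have := htlt (J+1) (le_refl _)
  omega

end Mirror

end Stmt8Aux

namespace Stmt8Aux

open Set Function

lemma hall_inj {ι α : Type*} (t : ι → Set α) (hfin : ∀ i, (t i).Finite)
    (hcond : ∀ s : Finset ι, s.card ≤ (⋃ i ∈ s, t i).ncard) :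
    ∃ F : ι → α, Function.Injective F ∧ ∀ i, F i ∈ t i := by
  classical
  have hmain := (Finset.all_card_le_biUnion_card_iff_exists_injective
    (fun i => (hfin i).toFinset)).mp ?_
  · obtain ⟨F, hF1, hF2⟩ := hmain
    exact ⟨F, hF1, fun i => by have := hF2 i; simpa using this⟩
  · intro s
    have hcoe : ((s.biUnion fun i => (hfin i).toFinset : Finset α) : Set α) = ⋃ i ∈ s, t i := by
      ext x
      simp [Set.Finite.mem_toFinset]
    calc s.card ≤ (⋃ i ∈ s, t i).ncard := hcond s
      _ = (s.biUnion fun i => (hfin i).toFinset).card := by rw [← hcoe, Set.ncard_coe_finset]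

lemma iterate_nbhd_subset {Z : Type*} [MetricSpace Z] {w : ℝ} (hw : 0 ≤ w) (S : Set Z) :
    ∀ k : ℕ, (nbhd w)^[k] S ⊆ nbhd (k * w) S := by
  intro k
  induction k with
  | zero =>
    simp only [Function.iterate_zero, id_eq, Nat.cast_zero, zero_mul]
    intro z hz
    exact ⟨z, hz, by simp⟩
  | succ k ih =>
    rw [Function.iterate_succ_apply']
    intro z hz
    have h1 : z ∈ nbhd w (nbhd (k * w) S) := nbhd_mono_set ih hz
    have h2 : z ∈ nbhd (w + k * w) S := nbhd_nbhd h1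
    have heq : ((k+1 : ℕ):ℝ) * w = w + k * w := by push_cast; ring
    exact nbhd_mono_radius (le_of_eq heq.symm) h2

end Stmt8Aux

open Stmt8Aux

/-- A quasi-isometry `f : X → Y` between uniformly discrete bounded-geometry
spaces is at bounded distance from a bijection iff there are constants `C`, `r`
with `||f⁻¹(S)| − |S|| ≤ C·|∂_r(S)|` for every finite `S ⊆ Y`. -/
theorem stmt8 {X Y : Type*} [MetricSpace X] [MetricSpace Y]
    (hudX : UniformlyDiscrete X) (hbgX : BoundedGeometry X)
    (hudY : UniformlyDiscrete Y) (hbgY : BoundedGeometry Y)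
    (f : X → Y) (g : Y → X) (hf : CoarseLipschitz f) (hg : CoarseLipschitz g)
    (hgf : ∃ C : ℝ, ∀ x : X, dist (g (f x)) x ≤ C)
    (hfg : ∃ C : ℝ, ∀ y : Y, dist (f (g y)) y ≤ C) :
    (∃ h : X → Y, Function.Bijective h ∧ ∃ C : ℝ, ∀ x, dist (h x) (f x) ≤ C) ↔
      ∃ C r : ℝ, 0 < r ∧ ∀ S : Set Y, S.Finite →
        |((f ⁻¹' S).ncard : ℝ) - (S.ncard : ℝ)| ≤ C * ((bdry r S).ncard : ℝ) := by
  classical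
  obtain ⟨C₀', hgf'⟩ := hgf
  obtain ⟨C₁', hfg'⟩ := hfg
  set C₀ : ℝ := max C₀' 0 with hC₀def
  have hC₀ : ∀ x, dist (g (f x)) x ≤ C₀ := fun x => le_trans (hgf' x) (le_max_left _ _)
  have hC₀0 : 0 ≤ C₀ := le_max_right _ _
  set C₁ : ℝ := max C₁' 0 with hC₁def
  have hC₁ : ∀ y, dist (f (g y)) y ≤ C₁ := fun y => le_trans (hfg' y) (le_max_left _ _)
  have hC₁0 : 0 ≤ C₁ := le_max_right _ _
  set M : ℕ := (hbgX C₀).choose with hMdef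
  have hMspec := (hbgX C₀).choose_spec
  have hfinpre : ∀ A : Set Y, A.Finite → (f ⁻¹' A).Finite := by
    intro A hA
    apply Set.Finite.subset (hA.biUnion (fun y _ => (hMspec (g y)).1))
    intro x hx
    have hfx : f x ∈ A := hx
    have hd := hC₀ x
    rw [dist_comm] at hd
    exact Set.mem_biUnion hfx hd
  constructor
  · rintro ⟨h, hbij, Ch, hCh⟩
    refine ⟨(M:ℝ) + 1, |Ch| + 1, by positivity, ?_⟩
    intro S hS
    set B : Set Y := bdry (|Ch| + 1) S with hB
    have hNfin : (nbhd (|Ch| + 1) S).Finite := nbhd_finite hbgY hS _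
    have hBfin : B.Finite := hNfin.subset Set.diff_subset
    have hpreSfin : (f ⁻¹' S).Finite := hfinpre S hS
    have hhSfin : (h ⁻¹' S).Finite := hS.preimage hbij.1.injOn
    have hhS : (h ⁻¹' S).ncard = S.ncard := by
      have h1 : h '' (h ⁻¹' S) = S := Set.image_preimage_eq S hbij.2
      have h2 := Set.ncard_image_of_injective (h ⁻¹' S) hbij.1
      rw [h1] at h2; exact h2.symm
    have hdiff1 : ((f ⁻¹' S) \ (h ⁻¹' S)).ncard ≤ B.ncard := by
      have himg : h '' ((f ⁻¹' S) \ (h ⁻¹' S)) ⊆ B := by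
        rintro _ ⟨x, ⟨hxf, hxh⟩, rfl⟩
        refine ⟨⟨f x, hxf, ?_⟩, hxh⟩
        have habs := le_abs_self Ch
        calc dist (h x) (f x) ≤ Ch := hCh x
          _ ≤ |Ch| + 1 := by linarith
      calc ((f ⁻¹' S) \ (h ⁻¹' S)).ncard
          = (h '' ((f ⁻¹' S) \ (h ⁻¹' S))).ncard :=
            (Set.ncard_image_of_injective _ hbij.1).symm
        _ ≤ B.ncard := Set.ncard_le_ncard himg hBfin
    have hclaim1 : (f ⁻¹' S).ncard ≤ S.ncard + B.ncard := by
      have h1 := Set.ncard_union_le ((f ⁻¹' S) ∩ (h ⁻¹' S)) ((f ⁻¹' S) \ (h ⁻¹' S))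
      rw [Set.inter_union_diff] at h1
      have h2 : ((f ⁻¹' S) ∩ (h ⁻¹' S)).ncard ≤ (h ⁻¹' S).ncard :=
        Set.ncard_le_ncard Set.inter_subset_right hhSfin
      omega
    have hdiff2 : ((h ⁻¹' S) \ (f ⁻¹' S)).ncard ≤ M * B.ncard := by
      have hEfin : ((h ⁻¹' S) \ (f ⁻¹' S)).Finite := hhSfin.subset Set.diff_subset
      have hkey := ncard_le_mul_ncard_image f hEfin M ?fib
      · apply le_trans hkey
        apply Nat.mul_le_mul_left
        apply Set.ncard_le_ncard _ hBfin
        rintro _ ⟨x, ⟨hxh, hxf⟩, rfl⟩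
        refine ⟨⟨h x, hxh, ?_⟩, hxf⟩
        have habs := le_abs_self Ch
        calc dist (f x) (h x) = dist (h x) (f x) := dist_comm _ _
          _ ≤ Ch := hCh x
          _ ≤ |Ch| + 1 := by linarith
      case fib =>
        intro b
        apply le_trans (Set.ncard_le_ncard _ (hMspec (g b)).1) (hMspec (g b)).2
        rintro x ⟨_, hfx⟩
        rw [Set.mem_setOf_eq, ← hfx]
        have hd := hC₀ x
        rw [dist_comm] at hd
        exact hd
    have hclaim2 : S.ncard ≤ (f ⁻¹' S).ncard + M * B.ncard := by
      have h1 := Set.ncard_union_le ((h ⁻¹' S) ∩ (f ⁻¹' S)) ((h ⁻¹' S) \ (f ⁻¹' S))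
      rw [Set.inter_union_diff] at h1
      have h2 : ((h ⁻¹' S) ∩ (f ⁻¹' S)).ncard ≤ (f ⁻¹' S).ncard :=
        Set.ncard_le_ncard Set.inter_subset_right hpreSfin
      omega
    have hc1 : ((f ⁻¹' S).ncard : ℝ) ≤ (S.ncard : ℝ) + (B.ncard : ℝ) := by exact_mod_cast hclaim1
    have hc2 : (S.ncard : ℝ) ≤ ((f ⁻¹' S).ncard : ℝ) + (M:ℝ) * (B.ncard : ℝ) := by
      exact_mod_cast hclaim2
    have hBnn : (0:ℝ) ≤ (B.ncard : ℝ) := Nat.cast_nonneg _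
    have hMnn : (0:ℝ) ≤ (M:ℝ) := Nat.cast_nonneg _
    rw [abs_sub_le_iff]
    constructor
    · nlinarith
    · nlinarith
  · rintro ⟨C, r, hr, hEst⟩
    set w : ℝ := r + C₁ + 1 with hwdef
    have hw : 0 < w := by rw [hwdef]; linarith
    set P : ℕ := max (hbgY w).choose 1 with hPdef
    have hPspec := (hbgY w).choose_spec
    have hP : 1 ≤ P := le_max_right _ _
    have hballfin : ∀ b : Y, ({y : Y | dist y b ≤ w}).Finite := fun b => (hPspec b).1
    have hball : ∀ b : Y, ({y : Y | dist y b ≤ w}).ncard ≤ P :=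
      fun b => le_trans (hPspec b).2 (le_max_left _ _)
    set Cn : ℕ := max ⌈C⌉₊ 1 with hCndef
    have hCn : 1 ≤ Cn := le_max_right _ _
    have hCCn : C ≤ (Cn:ℝ) := by
      refine le_trans (Nat.le_ceil C) ?_
      exact_mod_cast le_max_left _ _
    have hfinN : ∀ A : Set Y, A.Finite → (nbhd w A).Finite := fun A hA => nbhd_finite hbgY hA w
    have hestN : ∀ T : Set Y, T.Finite →
        T.ncard ≤ (f ⁻¹' T).ncard + Cn * (bdry w T).ncard ∧
        (f ⁻¹' T).ncard ≤ T.ncard + Cn * (bdry w T).ncard := by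
      intro T hT
      have h0 := hEst T hT
      have hbsub : bdry r T ⊆ bdry w T := by
        intro z hz
        exact ⟨nbhd_mono_radius (by rw [hwdef]; linarith) hz.1, hz.2⟩
      have hbwfin : (bdry w T).Finite := (hfinN T hT).subset Set.diff_subset
      have hble : (bdry r T).ncard ≤ (bdry w T).ncard := Set.ncard_le_ncard hbsub hbwfin
      have hble' : ((bdry r T).ncard:ℝ) ≤ ((bdry w T).ncard:ℝ) := by exact_mod_cast hble
      have hchain : |((f ⁻¹' T).ncard : ℝ) - (T.ncard : ℝ)| ≤ (Cn:ℝ) * ((bdry w T).ncard:ℝ) := by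
        apply le_trans h0
        have hnn : (0:ℝ) ≤ ((bdry r T).ncard:ℝ) := Nat.cast_nonneg _
        have hCnn : (0:ℝ) ≤ (Cn:ℝ) := Nat.cast_nonneg _
        calc C * ((bdry r T).ncard:ℝ) ≤ (Cn:ℝ) * ((bdry r T).ncard:ℝ) :=
              mul_le_mul_of_nonneg_right hCCn hnn
          _ ≤ (Cn:ℝ) * ((bdry w T).ncard:ℝ) := mul_le_mul_of_nonneg_left hble' hCnn
      rw [abs_sub_le_iff] at hchain
      constructor
      · have h1 : (T.ncard:ℝ) ≤ ((f ⁻¹' T).ncard : ℝ) + (Cn:ℝ) * ((bdry w T).ncard:ℝ) := by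
          linarith [hchain.2]
        exact_mod_cast h1
      · have h1 : ((f ⁻¹' T).ncard:ℝ) ≤ (T.ncard : ℝ) + (Cn:ℝ) * ((bdry w T).ncard:ℝ) := by
          linarith [hchain.1]
        exact_mod_cast h1
    have hsur : ∀ y, dist (f (g y)) y ≤ w := fun y => le_trans (hC₁ y) (by rw [hwdef]; linarith)
    set K1 : ℕ := Cn^3 * P + 3 with hK1def
    set K2 : ℕ := 3 * P * Cn^2 + 3 with hK2def
    set R : ℝ := ((max K1 K2 : ℕ) : ℝ) * w with hRdef
    have hK1R : ((K1:ℕ):ℝ) * w ≤ R := by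
      rw [hRdef]
      apply mul_le_mul_of_nonneg_right _ hw.le
      exact_mod_cast le_max_left K1 K2
    have hK2R : ((K2:ℕ):ℝ) * w ≤ R := by
      rw [hRdef]
      apply mul_le_mul_of_nonneg_right _ hw.le
      exact_mod_cast le_max_right K1 K2
    have hufin : ∀ y : Y, ({x : X | dist (f x) y ≤ R}).Finite := by
      intro y
      exact hfinpre _ (ball_finite hbgY R y)
    have hucond : ∀ s : Finset Y, s.card ≤ (⋃ y ∈ s, {x : X | dist (f x) y ≤ R}).ncard := by
      intro s
      have hset : (⋃ y ∈ s, {x : X | dist (f x) y ≤ R}) = f ⁻¹' (nbhd R (↑s : Set Y)) := by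
        ext x
        simp only [Set.mem_iUnion, Set.mem_setOf_eq, Set.mem_preimage, nbhd,
          Finset.mem_coe]
        constructor
        · rintro ⟨y, hy, hd⟩; exact ⟨y, hy, hd⟩
        · rintro ⟨y, hy, hd⟩; exact ⟨y, hy, hd⟩
      rw [hset]
      have h1 : (↑s : Set Y).ncard ≤ (f ⁻¹' ((nbhd w)^[K1] (↑s : Set Y))).ncard :=
        primal_hall f g w hw Cn P hCn hP hfinN hfinpre hestN hsur hball hballfin s.finite_toSet
      have hsub : (nbhd w)^[K1] (↑s : Set Y) ⊆ nbhd R (↑s : Set Y) :=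
        subset_trans (iterate_nbhd_subset hw.le _ K1) (nbhd_mono_radius hK1R)
      have hfinR : (f ⁻¹' (nbhd R (↑s : Set Y))).Finite :=
        hfinpre _ (nbhd_finite hbgY s.finite_toSet R)
      calc s.card = (↑s : Set Y).ncard := (Set.ncard_coe_finset s).symm
        _ ≤ (f ⁻¹' ((nbhd w)^[K1] (↑s : Set Y))).ncard := h1
        _ ≤ (f ⁻¹' (nbhd R (↑s : Set Y))).ncard :=
            Set.ncard_le_ncard (Set.preimage_mono hsub) hfinR
    obtain ⟨u, hu_inj, hu_mem⟩ := hall_inj _ hufin hucond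
    have hvfin : ∀ x : X, ({z : Y | dist z (f x) ≤ R}).Finite := fun x => ball_finite hbgY R (f x)
    have hvcond : ∀ s : Finset X, s.card ≤ (⋃ x ∈ s, {z : Y | dist z (f x) ≤ R}).ncard := by
      intro s
      have hset : (⋃ x ∈ s, {z : Y | dist z (f x) ≤ R}) = nbhd R (f '' (↑s : Set X)) := by
        ext z
        simp only [Set.mem_iUnion, Set.mem_setOf_eq, nbhd, Set.mem_image]
        constructor
        · rintro ⟨x, hx, hd⟩
          exact ⟨f x, ⟨x, hx, rfl⟩, hd⟩
        · rintro ⟨a, ⟨x, hx, rfl⟩, hd⟩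
          exact ⟨x, hx, hd⟩
      rw [hset]
      have hsfin : (f '' (↑s : Set X)).Finite := s.finite_toSet.image f
      have h1 : (f ⁻¹' (f '' (↑s : Set X))).ncard ≤ ((nbhd w)^[K2] (f '' (↑s : Set X))).ncard :=
        mirror_hall f g w hw Cn P hCn hP hfinN hfinpre hestN hsur hball hballfin hsfin
      have h2 : (↑s : Set X).ncard ≤ (f ⁻¹' (f '' (↑s : Set X))).ncard :=
        Set.ncard_le_ncard (Set.subset_preimage_image f (↑s : Set X)) (hfinpre _ hsfin)
      have hsub : (nbhd w)^[K2] (f '' (↑s : Set X)) ⊆ nbhd R (f '' (↑s : Set X)) :=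
        subset_trans (iterate_nbhd_subset hw.le _ K2) (nbhd_mono_radius hK2R)
      have hfinR : (nbhd R (f '' (↑s : Set X))).Finite := nbhd_finite hbgY hsfin R
      calc s.card = (↑s : Set X).ncard := (Set.ncard_coe_finset s).symm
        _ ≤ (f ⁻¹' (f '' (↑s : Set X))).ncard := h2
        _ ≤ ((nbhd w)^[K2] (f '' (↑s : Set X))).ncard := h1
        _ ≤ (nbhd R (f '' (↑s : Set X))).ncard := Set.ncard_le_ncard hsub hfinR
    obtain ⟨v, hv_inj, hv_mem⟩ := hall_inj _ hvfin hvcond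
    obtain ⟨h, hbij, hside⟩ := csb hu_inj hv_inj
    refine ⟨h, hbij, R, ?_⟩
    intro x
    rcases hside x with hx | hx
    · rw [hx]; exact hv_mem x
    · have hm := hu_mem (h x)
      rw [hx] at hm
      rw [dist_comm]
      exact hm
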